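/- arXiv:1606.01378 — 2 statements merged into one kernel-verified Lean document; each statement's English description precedes it below -/
import Mathlib

section
/- Let (X,μ) be a measure space and let (U_σ)_{σ∈(0,1]} be a family of measurable subsets of X with U_{σ'} ⊆ U_σ whenever σ' ≤ σ. Let κ > 1, p̄ ≥ 1, C ≥ 1 and γ > 0. Suppose f is a μ-measurable function on U₁ such that ‖f‖_{L^{βκ}(U_{σ'})} ≤ ( C·(1+β)^{γ}/(σ−σ')^{γ} )^{1/β}·‖f‖_{L^{β}(U_σ)} for all 0 < σ' < σ ≤ 1 and all β > 0. Then there exist constants M = M(C,γ,κ,p̄) and γ₀ = γ₀(γ,κ) such that for all δ ∈ (0,1) and all p ∈ (0,p̄]: esssup_{U_δ} |f| ≤ ( M/(1−δ)^{γ₀} )^{1/p}·‖f‖_{L^{p}(U₁)}. -/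
open MeasureTheory Set ENNReal Filter

/-- The (quasi-)norm `‖f‖_{L^β(U)} = (∫_U |f|^β dμ)^{1/β}`, valued in `ℝ≥0∞`,
for any exponent `β > 0`. -/
noncomputable def plnorm {X : Type*} [MeasurableSpace X] (μ : Measure X) (U : Set X)
    (f : X → ℝ) (β : ℝ) : ℝ≥0∞ :=
  (∫⁻ x in U, ENNReal.ofReal |f x| ^ β ∂μ) ^ (1 / β)

lemma aux_geom_sum {x : ℝ} (hx0 : 0 ≤ x) (hx1 : x < 1) (N : ℕ) :
    ∑ n ∈ Finset.range N, ((n : ℝ) + 1) * x ^ n ≤ (1 - x)⁻¹ ^ 2 := by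
  have hne : (1 : ℝ) - x ≠ 0 := by linarith
  have h1 : HasSum (fun n : ℕ => (n : ℝ) * x ^ n) (x / (1 - x) ^ 2) :=
    hasSum_coe_mul_geometric_of_norm_lt_one
      (by rwa [Real.norm_eq_abs, abs_of_nonneg hx0])
  have h2 : HasSum (fun n : ℕ => x ^ n) ((1 - x)⁻¹) :=
    hasSum_geometric_of_lt_one hx0 hx1
  have hsum : HasSum (fun n : ℕ => ((n : ℝ) + 1) * x ^ n) ((1 - x)⁻¹ ^ 2) := by
    have h := h1.add h2
    have e1 : (fun n : ℕ => (n : ℝ) * x ^ n + x ^ n) = fun n : ℕ => ((n : ℝ) + 1) * x ^ n := by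
      funext n; ring
    have e2 : x / (1 - x) ^ 2 + (1 - x)⁻¹ = (1 - x)⁻¹ ^ 2 := by
      field_simp
      ring
    rwa [e1, e2] at h
  exact sum_le_hasSum _ (fun n _ => by positivity) hsum

lemma aux_geom_sum' {x : ℝ} (hx0 : 0 ≤ x) (hx1 : x < 1) (N : ℕ) :
    ∑ n ∈ Finset.range N, x ^ n ≤ (1 - x)⁻¹ := by
  have h2 : HasSum (fun n : ℕ => x ^ n) ((1 - x)⁻¹) :=
    hasSum_geometric_of_lt_one hx0 hx1
  exact sum_le_hasSum _ (fun n _ => by positivity) h2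

lemma aux_prod_bound (κ p₀ C γ δ p : ℝ) (hκ : 1 < κ) (hp₀ : 1 ≤ p₀) (hC : 1 ≤ C)
    (hγ : 0 < γ) (hδ0 : 0 < δ) (hδ1 : δ < 1) (hp : 0 < p) (hpp₀ : p ≤ p₀) (N : ℕ) :
    ∏ n ∈ Finset.range N,
        (C * (1 + p * κ ^ n) ^ γ / ((1 - δ) / 2 ^ (n + 1)) ^ γ) ^ (1 / (p * κ ^ n))
      ≤ (Real.exp ((1 - κ⁻¹)⁻¹ ^ 2 *
            (Real.log C + γ * Real.log (1 + p₀) + γ * Real.log κ + γ * Real.log 2)) /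
          (1 - δ) ^ (γ * (1 - κ⁻¹)⁻¹)) ^ (1 / p) := by
  have hκ0 : (0:ℝ) < κ := by linarith
  set x : ℝ := κ⁻¹ with hxdef
  have hx0 : 0 < x := by positivity
  have hx1 : x < 1 := by
    rw [hxdef, inv_lt_one_iff₀]; right; exact hκ
  have hδ' : (0:ℝ) < 1 - δ := by linarith
  set L : ℝ := Real.log C + γ * Real.log (1 + p₀) + γ * Real.log κ + γ * Real.log 2 with hLdef
  have hlogC : 0 ≤ Real.log C := Real.log_nonneg hC
  have hlogp₀ : 0 ≤ Real.log (1 + p₀) := Real.log_nonneg (by linarith)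
  have hlogκ : 0 ≤ Real.log κ := Real.log_nonneg hκ.le
  have hlog2 : 0 ≤ Real.log 2 := Real.log_nonneg one_le_two
  have hL : 0 ≤ L := by
    have := hγ.le
    rw [hLdef]; positivity
  have hnlog : 0 ≤ -Real.log (1 - δ) := by
    have : Real.log (1 - δ) ≤ 0 := Real.log_nonpos hδ'.le (by linarith)
    linarith
  -- the positive factors
  set b : ℕ → ℝ := fun n => C * (1 + p * κ ^ n) ^ γ / ((1 - δ) / 2 ^ (n + 1)) ^ γ with hbdef
  have hb : ∀ n, 0 < b n := by
    intro n
    have h1 : (0:ℝ) < 1 + p * κ ^ n := by positivity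
    have h2 : (0:ℝ) < (1 - δ) / 2 ^ (n + 1) := by positivity
    rw [hbdef]
    have : (0:ℝ) < C := by linarith
    positivity
  set a : ℕ → ℝ := fun n => b n ^ (1 / (p * κ ^ n)) with hadef
  have ha : ∀ n, 0 < a n := fun n => Real.rpow_pos_of_pos (hb n) _
  -- RHS is positive
  set R : ℝ := (Real.exp ((1 - x)⁻¹ ^ 2 * L) / (1 - δ) ^ (γ * (1 - x)⁻¹)) ^ (1 / p) with hRdef
  have hR0 : 0 < Real.exp ((1 - x)⁻¹ ^ 2 * L) / (1 - δ) ^ (γ * (1 - x)⁻¹) := by positivity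
  have hR : 0 < R := Real.rpow_pos_of_pos hR0 _
  -- log of each factor, and its bound
  have hloga : ∀ n : ℕ, Real.log (a n) ≤
      (1 / p) * (((n : ℝ) + 1) * x ^ n * L + x ^ n * (γ * (-Real.log (1 - δ)))) := by
    intro n
    have hκn : (0:ℝ) < κ ^ n := by positivity
    have h1 : (0:ℝ) < 1 + p * κ ^ n := by positivity
    have h2 : (0:ℝ) < (1 - δ) / 2 ^ (n + 1) := by positivity
    have hC0 : (0:ℝ) < C := by linarith
    have e1 : Real.log (a n) = (1 / (p * κ ^ n)) * Real.log (b n) :=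
      Real.log_rpow (hb n) _
    have e2 : Real.log (b n) =
        Real.log C + γ * Real.log (1 + p * κ ^ n)
          - γ * (Real.log (1 - δ) - (n + 1) * Real.log 2) := by
      rw [hbdef]
      rw [Real.log_div (by positivity) (by positivity), Real.log_mul (by positivity) (by positivity),
        Real.log_rpow h1, Real.log_rpow h2, Real.log_div (by positivity) (by positivity),
        Real.log_pow]
      push_cast
      ring
    have hmono : Real.log (1 + p * κ ^ n) ≤ Real.log (1 + p₀) + n * Real.log κ := by
      have hle : 1 + p * κ ^ n ≤ (1 + p₀) * κ ^ n := by
        have h3 : (1:ℝ) ≤ κ ^ n := one_le_pow₀ hκ.le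
        nlinarith
      calc Real.log (1 + p * κ ^ n) ≤ Real.log ((1 + p₀) * κ ^ n) :=
            Real.log_le_log h1 hle
        _ = Real.log (1 + p₀) + n * Real.log κ := by
            rw [Real.log_mul (by positivity) (by positivity), Real.log_pow]
    have hbracket : Real.log (b n) ≤ ((n:ℝ) + 1) * L + γ * (-Real.log (1 - δ)) := by
      rw [e2, hLdef]
      have hn0 : (0:ℝ) ≤ (n:ℝ) := Nat.cast_nonneg n
      nlinarith [mul_le_mul_of_nonneg_left hmono hγ.le, mul_nonneg hn0 hlogC,
        mul_nonneg hn0 (mul_nonneg hγ.le hlogp₀), mul_nonneg hγ.le hlogκ,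
        mul_nonneg hγ.le hlog2]
    have hxinv : (1 : ℝ) / (p * κ ^ n) = (1 / p) * x ^ n := by
      rw [hxdef, inv_pow]
      field_simp
    rw [e1, hxinv]
    calc (1 / p) * x ^ n * Real.log (b n)
        ≤ (1 / p) * x ^ n * (((n:ℝ) + 1) * L + γ * (-Real.log (1 - δ))) := by
          apply mul_le_mul_of_nonneg_left hbracket (by positivity)
      _ = (1 / p) * (((n : ℝ) + 1) * x ^ n * L + x ^ n * (γ * (-Real.log (1 - δ)))) := by ring
  -- sum bound
  have split : ∑ n ∈ Finset.range N,
        (1 / p) * (((n : ℝ) + 1) * x ^ n * L + x ^ n * (γ * (-Real.log (1 - δ))))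
      = (1 / p) * ((∑ n ∈ Finset.range N, ((n : ℝ) + 1) * x ^ n) * L
          + (∑ n ∈ Finset.range N, x ^ n) * (γ * (-Real.log (1 - δ)))) := by
    rw [Finset.sum_mul, Finset.sum_mul, ← Finset.sum_add_distrib, Finset.mul_sum]
  have hsum : ∑ n ∈ Finset.range N, Real.log (a n) ≤
      (1 / p) * ((1 - x)⁻¹ ^ 2 * L + γ * (1 - x)⁻¹ * (-Real.log (1 - δ))) := by
    calc ∑ n ∈ Finset.range N, Real.log (a n)
        ≤ ∑ n ∈ Finset.range N,
            (1 / p) * (((n : ℝ) + 1) * x ^ n * L + x ^ n * (γ * (-Real.log (1 - δ)))) :=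
          Finset.sum_le_sum fun n _ => hloga n
      _ = (1 / p) * ((∑ n ∈ Finset.range N, ((n : ℝ) + 1) * x ^ n) * L
            + (∑ n ∈ Finset.range N, x ^ n) * (γ * (-Real.log (1 - δ)))) := split
      _ ≤ (1 / p) * ((1 - x)⁻¹ ^ 2 * L + γ * (1 - x)⁻¹ * (-Real.log (1 - δ))) := by
          have s1 := aux_geom_sum hx0.le hx1 N
          have s2 := aux_geom_sum' hx0.le hx1 N
          have t1 := mul_le_mul_of_nonneg_right s1 hL
          have t2 := mul_le_mul_of_nonneg_right s2 (mul_nonneg hγ.le hnlog)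
          apply mul_le_mul_of_nonneg_left _ (by positivity : (0:ℝ) ≤ 1/p)
          have e : γ * (1 - x)⁻¹ * (-Real.log (1 - δ))
              = (1 - x)⁻¹ * (γ * (-Real.log (1 - δ))) := by ring
          rw [e]
          exact add_le_add t1 t2
  have hlogR : Real.log R
      = (1 / p) * ((1 - x)⁻¹ ^ 2 * L + γ * (1 - x)⁻¹ * (-Real.log (1 - δ))) := by
    rw [hRdef, Real.log_rpow hR0, Real.log_div (by positivity) (by positivity),
      Real.log_exp, Real.log_rpow hδ']
    ring
  have hprodpos : 0 < ∏ n ∈ Finset.range N, a n := Finset.prod_pos fun n _ => ha n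
  have hlogprod : Real.log (∏ n ∈ Finset.range N, a n) = ∑ n ∈ Finset.range N, Real.log (a n) :=
    Real.log_prod fun n _ => (ha n).ne'
  calc ∏ n ∈ Finset.range N, a n = Real.exp (Real.log (∏ n ∈ Finset.range N, a n)) :=
        (Real.exp_log hprodpos).symm
    _ ≤ Real.exp (Real.log R) := by
        apply Real.exp_le_exp.mpr
        rw [hlogprod, hlogR]
        exact hsum
    _ = R := Real.exp_log hR

/-- Moser iteration lemma, Lemma A.5.
Let `(U_σ)_{σ∈(0,1]}` be a nondecreasing family of measurable sets, `κ > 1`, `p̄ ≥ 1`,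
`C ≥ 1`, `γ > 0`, and let `f` be measurable with
`‖f‖_{L^{βκ}(U_{σ'})} ≤ (C(1+β)^γ/(σ-σ')^γ)^{1/β} ‖f‖_{L^β(U_σ)}` for all
`0 < σ' < σ ≤ 1`, `β > 0`. Then there are `M = M(C,γ,κ,p̄)` and `γ₀ = γ₀(γ,κ)` with
`esssup_{U_δ} |f| ≤ (M/(1-δ)^{γ₀})^{1/p} ‖f‖_{L^p(U₁)}` for all `δ ∈ (0,1)`, `p ∈ (0,p̄]`. -/
theorem statement12 {X : Type*} [MeasurableSpace X] (μ : Measure X)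
    (U : ℝ → Set X)
    (hUmeas : ∀ σ : ℝ, 0 < σ → σ ≤ 1 → MeasurableSet (U σ))
    (hUmono : ∀ σ' σ : ℝ, 0 < σ' → σ' ≤ σ → σ ≤ 1 → U σ' ⊆ U σ)
    (κ p₀ C γ : ℝ) (hκ : 1 < κ) (hp₀ : 1 ≤ p₀) (hC : 1 ≤ C) (hγ : 0 < γ)
    (f : X → ℝ) (hf : Measurable f)
    (hiter : ∀ σ' σ β : ℝ, 0 < σ' → σ' < σ → σ ≤ 1 → 0 < β →
      plnorm μ (U σ') f (β * κ)
        ≤ ENNReal.ofReal (C * (1 + β) ^ γ / (σ - σ') ^ γ) ^ (1 / β) *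
            plnorm μ (U σ) f β) :
    ∃ M γ₀ : ℝ, 0 < M ∧ 0 < γ₀ ∧
      ∀ δ p : ℝ, δ ∈ Ioo (0 : ℝ) 1 → 0 < p → p ≤ p₀ →
        essSup (fun x => (ENNReal.ofReal |f x|)) (μ.restrict (U δ))
          ≤ ENNReal.ofReal (M / (1 - δ) ^ γ₀) ^ (1 / p) * plnorm μ (U 1) f p := by
  have hκ0 : (0:ℝ) < κ := lt_trans one_pos hκ
  have hx1 : κ⁻¹ < 1 := by rw [inv_lt_one_iff₀]; right; exact hκ
  have hxpos : (0:ℝ) < 1 - κ⁻¹ := by linarith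
  have hC0 : (0:ℝ) < C := by linarith
  refine ⟨Real.exp ((1 - κ⁻¹)⁻¹ ^ 2 *
      (Real.log C + γ * Real.log (1 + p₀) + γ * Real.log κ + γ * Real.log 2)),
    γ * (1 - κ⁻¹)⁻¹, Real.exp_pos _, mul_pos hγ (inv_pos.mpr hxpos), ?_⟩
  intro δ p hδ hp hpp₀
  obtain ⟨hδ0, hδ1⟩ := hδ
  have hδ' : (0:ℝ) < 1 - δ := by linarith
  set σs : ℕ → ℝ := fun n => δ + (1 - δ) / 2 ^ n with hσdef
  have hσpos : ∀ n, 0 < σs n := fun n =>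
    add_pos_of_pos_of_nonneg hδ0 (by positivity)
  have hσle1 : ∀ n, σs n ≤ 1 := by
    intro n
    have h2 : (1:ℝ) ≤ 2 ^ n := one_le_pow₀ one_le_two
    have : (1 - δ) / 2 ^ n ≤ 1 - δ := div_le_self hδ'.le h2
    simp only [hσdef]
    linarith
  have hσlt : ∀ n, σs (n+1) < σs n := by
    intro n
    have h1 : (1 - δ) / 2 ^ (n+1) < (1 - δ) / 2 ^ n :=
      div_lt_div_of_pos_left hδ' (by positivity)
        (pow_lt_pow_right₀ one_lt_two (Nat.lt_succ_self n))
    simp only [hσdef]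
    linarith
  have hσdiff : ∀ n, σs n - σs (n+1) = (1 - δ) / 2 ^ (n+1) := by
    intro n
    simp only [hσdef]
    rw [pow_succ]
    field_simp
    ring
  have hδleσ : ∀ n, δ ≤ σs n := fun n => le_add_of_nonneg_right (by positivity)
  have hσ0 : σs 0 = 1 := by simp [hσdef]
  have hq : ∀ n : ℕ, 0 < p * κ ^ n := fun n => by positivity
  have hbpos : ∀ n : ℕ, 0 < C * (1 + p * κ ^ n) ^ γ / ((1 - δ) / 2 ^ (n + 1)) ^ γ := by
    intro n
    have h1 : (0:ℝ) < 1 + p * κ ^ n := by positivity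
    have h2 : (0:ℝ) < (1 - δ) / 2 ^ (n + 1) := by positivity
    positivity
  -- main iteration
  have key : ∀ N : ℕ, plnorm μ (U (σs N)) f (p * κ ^ N)
      ≤ (∏ n ∈ Finset.range N, ENNReal.ofReal
          ((C * (1 + p * κ ^ n) ^ γ / ((1 - δ) / 2 ^ (n + 1)) ^ γ) ^ (1 / (p * κ ^ n))))
        * plnorm μ (U 1) f p := by
    intro N
    induction N with
    | zero => simp [hσ0]
    | succ N ih =>
      have step := hiter (σs (N+1)) (σs N) (p * κ ^ N) (hσpos (N+1)) (hσlt N)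
        (hσle1 N) (hq N)
      rw [hσdiff N, ENNReal.ofReal_rpow_of_pos (hbpos N)] at step
      have e : p * κ ^ N * κ = p * κ ^ (N+1) := by rw [pow_succ]; ring
      rw [e] at step
      refine step.trans ?_
      calc ENNReal.ofReal
            ((C * (1 + p * κ ^ N) ^ γ / ((1 - δ) / 2 ^ (N + 1)) ^ γ) ^ (1 / (p * κ ^ N)))
            * plnorm μ (U (σs N)) f (p * κ ^ N)
          ≤ ENNReal.ofReal
            ((C * (1 + p * κ ^ N) ^ γ / ((1 - δ) / 2 ^ (N + 1)) ^ γ) ^ (1 / (p * κ ^ N)))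
            * ((∏ n ∈ Finset.range N, ENNReal.ofReal
                ((C * (1 + p * κ ^ n) ^ γ / ((1 - δ) / 2 ^ (n + 1)) ^ γ) ^ (1 / (p * κ ^ n))))
              * plnorm μ (U 1) f p) := mul_le_mul_right ih _
        _ = _ := by rw [Finset.prod_range_succ]; ring
  -- the uniform bound
  have bound : ∀ N : ℕ, plnorm μ (U δ) f (p * κ ^ N)
      ≤ ENNReal.ofReal (Real.exp ((1 - κ⁻¹)⁻¹ ^ 2 *
            (Real.log C + γ * Real.log (1 + p₀) + γ * Real.log κ + γ * Real.log 2)) /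
          (1 - δ) ^ (γ * (1 - κ⁻¹)⁻¹)) ^ (1 / p) * plnorm μ (U 1) f p := by
    intro N
    have mono : plnorm μ (U δ) f (p * κ ^ N) ≤ plnorm μ (U (σs N)) f (p * κ ^ N) := by
      unfold plnorm
      refine ENNReal.rpow_le_rpow ?_ (by positivity)
      exact lintegral_mono_set (hUmono δ (σs N) hδ0 (hδleσ N) (hσle1 N))
    refine mono.trans ((key N).trans ?_)
    refine mul_le_mul_left ?_ _
    rw [← ENNReal.ofReal_prod_of_nonneg
      (fun n _ => (Real.rpow_pos_of_pos (hbpos n) _).le)]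
    have hb := aux_prod_bound κ p₀ C γ δ p hκ hp₀ hC hγ hδ0 hδ1 hp hpp₀ N
    refine (ENNReal.ofReal_le_ofReal hb).trans_eq ?_
    rw [ENNReal.ofReal_rpow_of_pos
      (div_pos (Real.exp_pos _) (Real.rpow_pos_of_pos hδ' _))]
  -- essSup argument
  set B := ENNReal.ofReal (Real.exp ((1 - κ⁻¹)⁻¹ ^ 2 *
      (Real.log C + γ * Real.log (1 + p₀) + γ * Real.log κ + γ * Real.log 2)) /
      (1 - δ) ^ (γ * (1 - κ⁻¹)⁻¹)) ^ (1 / p) * plnorm μ (U 1) f p with hBdef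
  by_contra hcon
  push_neg at hcon
  obtain ⟨c, hBc, hcL⟩ := exists_between hcon
  have hc_top : c ≠ ⊤ := (hcL.trans_le le_top).ne
  have hc0 : c ≠ 0 := (zero_le.trans_lt hBc).ne'
  have hg : Measurable (fun x => ENNReal.ofReal |f x|) := hf.abs.ennreal_ofReal
  have hS : MeasurableSet {x | c < ENNReal.ofReal |f x|} :=
    measurableSet_lt measurable_const hg
  set m := (μ.restrict (U δ)) {x | c < ENNReal.ofReal |f x|} with hmdef
  have hm0 : m ≠ 0 := by
    intro h0
    have hae : ∀ᵐ x ∂(μ.restrict (U δ)), ENNReal.ofReal |f x| ≤ c := by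
      rw [ae_iff]
      simpa [not_le] using h0
    exact absurd (essSup_le_of_ae_le c hae) (not_le.mpr hcL)
  have hlow : ∀ N : ℕ, c * m ^ (1 / (p * κ ^ N)) ≤ plnorm μ (U δ) f (p * κ ^ N) := by
    intro N
    have hq' : 0 < p * κ ^ N := hq N
    have hint : c ^ (p * κ ^ N) * m ≤ ∫⁻ x in U δ, ENNReal.ofReal |f x| ^ (p * κ ^ N) ∂μ := by
      have hpt : ∀ x, ({x | c < ENNReal.ofReal |f x|}).indicator
          (fun _ => c ^ (p * κ ^ N)) x ≤ ENNReal.ofReal |f x| ^ (p * κ ^ N) := by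
        intro x
        by_cases hx : x ∈ {x | c < ENNReal.ofReal |f x|}
        · rw [Set.indicator_of_mem hx]
          exact ENNReal.rpow_le_rpow (le_of_lt hx) hq'.le
        · rw [Set.indicator_of_notMem hx]
          exact zero_le
      calc c ^ (p * κ ^ N) * m
          = ∫⁻ x in U δ, ({x | c < ENNReal.ofReal |f x|}).indicator
              (fun _ => c ^ (p * κ ^ N)) x ∂μ := (lintegral_indicator_const hS _).symm
        _ ≤ _ := lintegral_mono hpt
    have h2 := ENNReal.rpow_le_rpow hint (by positivity : (0:ℝ) ≤ 1 / (p * κ ^ N))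
    rw [ENNReal.mul_rpow_of_nonneg _ _ (by positivity), ← ENNReal.rpow_mul,
      mul_one_div_cancel hq'.ne', ENNReal.rpow_one] at h2
    exact h2
  have hcm : ∀ N : ℕ, c * m ^ (1 / (p * κ ^ N)) ≤ B := fun N => (hlow N).trans (bound N)
  set r := B / c with hrdef
  have hr1 : r < 1 := by
    rw [hrdef, ENNReal.div_lt_iff (Or.inl hc0) (Or.inl hc_top)]
    simpa using hBc
  have hr_top : r ≠ ⊤ := (hr1.trans_le le_top).ne
  have hmr : ∀ N : ℕ, m ≤ r ^ (p * κ ^ N) := by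
    intro N
    have h1 : m ^ (1 / (p * κ ^ N)) ≤ r := by
      rw [hrdef, ENNReal.le_div_iff_mul_le (Or.inl hc0) (Or.inl hc_top), mul_comm]
      exact hcm N
    calc m = (m ^ (1 / (p * κ ^ N))) ^ (p * κ ^ N) := by
          rw [← ENNReal.rpow_mul, one_div_mul_cancel (hq N).ne', ENNReal.rpow_one]
      _ ≤ r ^ (p * κ ^ N) := ENNReal.rpow_le_rpow h1 (hq N).le
  by_cases hr0 : r = 0
  · have h0 := hmr 0
    rw [hr0, ENNReal.zero_rpow_of_pos (hq 0)] at h0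
    exact hm0 (le_antisymm h0 zero_le)
  · have ht0 : 0 < r.toReal := ENNReal.toReal_pos hr0 hr_top
    have ht1 : r.toReal < 1 := by
      have := (ENNReal.toReal_lt_toReal hr_top ENNReal.one_ne_top).mpr hr1
      simpa using this
    have hm_top : m ≠ ⊤ := by
      have h1 := hmr 0
      have h2 : r ^ (p * κ ^ 0) ≤ 1 := ENNReal.rpow_le_one hr1.le (hq 0).le
      exact ((h1.trans h2).trans_lt ENNReal.one_lt_top).ne
    have hmt : 0 < m.toReal := ENNReal.toReal_pos hm0 hm_top
    have htend : Tendsto (fun N : ℕ => r.toReal ^ (p * κ ^ N)) atTop (nhds 0) := by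
      have h1 : Tendsto (fun N : ℕ => p * κ ^ N) atTop atTop :=
        (tendsto_pow_atTop_atTop_of_one_lt hκ).const_mul_atTop hp
      have h2 := (tendsto_rpow_atTop_of_base_lt_one _ (by linarith) ht1).comp h1
      exact h2
    obtain ⟨N, hN⟩ := (htend.eventually_lt_const hmt).exists
    have hle : m ≤ ENNReal.ofReal (r.toReal ^ (p * κ ^ N)) := by
      have h1 := hmr N
      rwa [← ENNReal.ofReal_toReal hr_top, ENNReal.ofReal_rpow_of_pos ht0] at h1
    have hlt : ENNReal.ofReal (r.toReal ^ (p * κ ^ N)) < m := by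
      calc ENNReal.ofReal (r.toReal ^ (p * κ ^ N)) < ENNReal.ofReal m.toReal :=
            (ENNReal.ofReal_lt_ofReal_iff hmt).mpr hN
        _ = m := ENNReal.ofReal_toReal hm_top
    exact (hle.trans_lt hlt).false
end

section
/- Let (X,μ) be a measure space, (U_σ)_{σ∈(0,1]} a family of measurable subsets of X with U_{σ'} ⊆ U_σ whenever σ' ≤ σ, and assume μ(U₁) ≤ 1. Let κ > 1, 0 < p₀ < κ, C ≥ 1 and γ > 0. Suppose f is a measurable function on U₁ such that ‖f‖_{L^{βκ}(U_{σ'})} ≤ ( C/(σ−σ')^{γ} )^{1/β}·‖f‖_{L^{β}(U_σ)} for all 0 < σ' < σ ≤ 1 and all β with 0 < β ≤ p₀/κ < 1. Then there exist constants M = M(C,γ,κ) and γ₀ = γ₀(γ,κ) such that for all δ ∈ (0,1) and all p ∈ (0, p₀/κ]: ‖f‖_{L^{p₀}(U_δ)} ≤ ( M/(1−δ)^{γ₀} )^{1/p − 1/p₀}·‖f‖_{L^{p}(U₁)}. -/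
set_option maxHeartbeats 1000000
open MeasureTheory Set ENNReal

lemma plnorm_eq_eLpNorm {X : Type*} [MeasurableSpace X] (μ : Measure X) (V : Set X)
    (f : X → ℝ) {β : ℝ} (hβ : 0 < β) :
    plnorm μ V f β = eLpNorm f (ENNReal.ofReal β) (μ.restrict V) := by
  rw [eLpNorm_eq_lintegral_rpow_enorm_toReal (by simp [hβ]) (by simp),
    ENNReal.toReal_ofReal hβ.le]
  unfold plnorm
  congr 1
  refine lintegral_congr fun x => ?_
  rw [Real.enorm_eq_ofReal_abs]

lemma plnorm_mono_exp {X : Type*} [MeasurableSpace X] (μ : Measure X) (V : Set X)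
    (hμ : μ V ≤ 1) (f : X → ℝ) (hf : Measurable f) {a b : ℝ}
    (ha : 0 < a) (hab : a ≤ b) :
    plnorm μ V f a ≤ plnorm μ V f b := by
  have hb : 0 < b := ha.trans_le hab
  rw [plnorm_eq_eLpNorm μ V f ha, plnorm_eq_eLpNorm μ V f hb]
  have h := eLpNorm_le_eLpNorm_mul_rpow_measure_univ (p := ENNReal.ofReal a)
    (q := ENNReal.ofReal b) (ENNReal.ofReal_le_ofReal hab)
    (hf.aestronglyMeasurable (μ := μ.restrict V))
  refine h.trans ?_
  rw [Measure.restrict_apply_univ]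
  have hone : μ V ^ (1 / (ENNReal.ofReal a).toReal - 1 / (ENNReal.ofReal b).toReal) ≤ 1 := by
    refine ENNReal.rpow_le_one hμ ?_
    rw [ENNReal.toReal_ofReal ha.le, ENNReal.toReal_ofReal hb.le]
    have : 1 / b ≤ 1 / a := one_div_le_one_div_of_le ha hab
    linarith
  calc eLpNorm f (ENNReal.ofReal b) (μ.restrict V) * μ V ^ (1 / (ENNReal.ofReal a).toReal - 1 / (ENNReal.ofReal b).toReal)
      ≤ eLpNorm f (ENNReal.ofReal b) (μ.restrict V) * 1 := by gcongr
    _ = _ := mul_one _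

/-- second Moser iteration lemma, Lemma A.6/A.7. -/
theorem statement13 {X : Type*} [MeasurableSpace X] (μ : Measure X)
    (U : ℝ → Set X)
    (hUmeas : ∀ σ : ℝ, 0 < σ → σ ≤ 1 → MeasurableSet (U σ))
    (hUmono : ∀ σ' σ : ℝ, 0 < σ' → σ' ≤ σ → σ ≤ 1 → U σ' ⊆ U σ)
    (hU1 : μ (U 1) ≤ 1)
    (κ p₀ C γ : ℝ) (hκ : 1 < κ) (hp₀pos : 0 < p₀) (hp₀ : p₀ < κ) (hC : 1 ≤ C) (hγ : 0 < γ)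
    (hp₀κ : p₀ / κ < 1)
    (f : X → ℝ) (hf : Measurable f)
    (hiter : ∀ σ' σ β : ℝ, 0 < σ' → σ' < σ → σ ≤ 1 → 0 < β → β ≤ p₀ / κ →
      plnorm μ (U σ') f (β * κ)
        ≤ ENNReal.ofReal (C / (σ - σ') ^ γ) ^ (1 / β) * plnorm μ (U σ) f β) :
    ∃ M γ₀ : ℝ, 0 < M ∧ 0 < γ₀ ∧
      ∀ δ p : ℝ, δ ∈ Ioo (0 : ℝ) 1 → 0 < p → p ≤ p₀ / κ →
        plnorm μ (U δ) f p₀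
          ≤ ENNReal.ofReal (M / (1 - δ) ^ γ₀) ^ (1 / p - 1 / p₀) * plnorm μ (U 1) f p := by
  have hκ0 : (0:ℝ) < κ := by linarith
  have hκ1 : (0:ℝ) < κ - 1 := by linarith
  set r : ℝ := κ / (κ - 1) with hr_def
  have hr0 : 0 < r := div_pos hκ0 hκ1
  have hCpos : (0:ℝ) < C := by linarith
  have hlC : 0 ≤ Real.log C := Real.log_nonneg hC
  have hl2 : 0 ≤ Real.log 2 := Real.log_nonneg one_le_two
  refine ⟨Real.exp (r * ((r+1) * Real.log C + γ * (r^2 + r) * Real.log 2)),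
    γ * (r+1) * r, Real.exp_pos _, by positivity, ?_⟩
  set M : ℝ := Real.exp (r * ((r+1) * Real.log C + γ * (r^2 + r) * Real.log 2)) with hM_def
  set γ₀ : ℝ := γ * (r+1) * r with hγ₀_def
  intro δ p hδ hp hpκ
  obtain ⟨hδ0, hδ1⟩ := hδ
  have h1δ : (0:ℝ) < 1 - δ := by linarith
  have hpκpos : 0 < p₀ / κ := div_pos hp₀pos hκ0
  -- the shrinking radii
  have hσpos : ∀ n : ℕ, (0:ℝ) < δ + (1-δ)/2^n := fun n =>
    add_pos_of_pos_of_nonneg hδ0 (by positivity)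
  have hσle1 : ∀ n : ℕ, δ + (1-δ)/2^n ≤ 1 := by
    intro n
    have h2 : (1:ℝ) ≤ 2^n := one_le_pow₀ one_le_two
    have : (1-δ)/2^n ≤ 1-δ := div_le_self h1δ.le h2
    linarith
  have hσgtδ : ∀ n : ℕ, δ < δ + (1-δ)/2^n := by
    intro n; have : (0:ℝ) < (1-δ)/2^n := by positivity
    linarith
  -- positivity of the factors
  have hDpos : ∀ n : ℕ, (0:ℝ) < C / ((1-δ)/2^n)^γ := by
    intro n
    have h1 : (0:ℝ) < (1-δ)/2^n := by positivity
    positivity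
  -- the key iteration
  have hkey : ∀ n : ℕ, (∀ k < n, p * κ^k ≤ p₀/κ) →
      plnorm μ (U (δ + (1-δ)/2^n)) f (p * κ^n)
        ≤ ENNReal.ofReal (∏ k ∈ Finset.range n, (C / ((1-δ)/2^(k+1))^γ) ^ (1/(p*κ^k)))
            * plnorm μ (U 1) f p := by
    intro n
    induction n with
    | zero =>
      intro _
      simp only [pow_zero, Finset.range_zero, Finset.prod_empty, ENNReal.ofReal_one, one_mul,
        mul_one]
      have : δ + (1-δ)/1 = 1 := by ring
      rw [this]
    | succ n ih =>
      intro h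
      have hβpos : 0 < p * κ^n := by positivity
      have hβle : p * κ^n ≤ p₀/κ := h n (Nat.lt_succ_self n)
      have h2n : (0:ℝ) < 2^n := by positivity
      have hlt : δ + (1-δ)/2^(n+1) < δ + (1-δ)/2^n := by
        have : (1-δ)/2^(n+1) < (1-δ)/2^n :=
          div_lt_div_of_pos_left h1δ h2n (by rw [pow_succ]; linarith)
        linarith
      have hstep := hiter (δ + (1-δ)/2^(n+1)) (δ + (1-δ)/2^n) (p*κ^n)
        (hσpos (n+1)) hlt (hσle1 n) hβpos hβle
      have hdiff : (δ + (1-δ)/2^n) - (δ + (1-δ)/2^(n+1)) = (1-δ)/2^(n+1) := by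
        rw [pow_succ]
        field_simp
        ring
      have hexp : p * κ^n * κ = p * κ^(n+1) := by rw [pow_succ]; ring
      rw [hdiff, hexp] at hstep
      refine hstep.trans ?_
      have hih := ih (fun k hk => h k (Nat.lt_succ_of_lt hk))
      calc ENNReal.ofReal (C / ((1-δ)/2^(n+1))^γ) ^ (1/(p*κ^n))
            * plnorm μ (U (δ + (1-δ)/2^n)) f (p*κ^n)
          ≤ ENNReal.ofReal (C / ((1-δ)/2^(n+1))^γ) ^ (1/(p*κ^n))
            * (ENNReal.ofReal (∏ k ∈ Finset.range n, (C / ((1-δ)/2^(k+1))^γ) ^ (1/(p*κ^k)))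
                * plnorm μ (U 1) f p) := mul_le_mul_right hih _
        _ = ENNReal.ofReal (∏ k ∈ Finset.range (n+1), (C / ((1-δ)/2^(k+1))^γ) ^ (1/(p*κ^k)))
            * plnorm μ (U 1) f p := by
            rw [ENNReal.ofReal_rpow_of_pos (hDpos (n+1)), ← mul_assoc,
              ← ENNReal.ofReal_mul (by positivity), Finset.prod_range_succ, mul_comm ((C / ((1-δ)/2^(n+1))^γ) ^ (1/(p*κ^n)))]
  -- choice of N
  have hex : ∃ n : ℕ, p₀/κ < p * κ^n := by
    obtain ⟨n, hn⟩ := pow_unbounded_of_one_lt ((p₀/κ)/p) hκ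
    exact ⟨n, by rwa [div_lt_iff₀ hp, mul_comm] at hn⟩
  obtain ⟨N, hN, hNmin⟩ : ∃ N : ℕ, p₀/κ < p * κ^N ∧ ∀ k < N, p * κ^k ≤ p₀/κ :=
    ⟨Nat.find hex, Nat.find_spec hex, fun k hk => not_lt.1 (Nat.find_min hex hk)⟩
  have hN1 : 1 ≤ N := by
    rcases Nat.eq_zero_or_pos N with h0 | h1
    · exfalso; rw [h0, pow_zero, mul_one] at hN; linarith
    · exact h1
  have hpN : p * κ^N ≤ p₀ := by
    have h1 : p * κ^(N-1) ≤ p₀/κ := hNmin (N-1) (by omega)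
    have h2 : κ^(N-1) * κ = κ^N := by
      rw [← pow_succ]; congr 1; omega
    calc p * κ^N = (p * κ^(N-1)) * κ := by rw [← h2]; ring
      _ ≤ (p₀/κ) * κ := by nlinarith
      _ = p₀ := div_mul_cancel₀ _ hκ0.ne'
  -- step 1: the final iteration step from σ_N down to δ
  have hstep1 := hiter δ (δ + (1-δ)/2^N) (p₀/κ) hδ0 (hσgtδ N) (hσle1 N) hpκpos le_rfl
  have hp₀eq : (p₀/κ) * κ = p₀ := div_mul_cancel₀ _ hκ0.ne'
  have hσNδ : (δ + (1-δ)/2^N) - δ = (1-δ)/2^N := by ring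
  rw [hp₀eq, hσNδ] at hstep1
  -- step 2: monotonicity of norms
  have hμN : μ (U (δ + (1-δ)/2^N)) ≤ 1 :=
    le_trans (measure_mono (hUmono _ 1 (hσpos N) (hσle1 N) le_rfl)) hU1
  have hstep2 : plnorm μ (U (δ + (1-δ)/2^N)) f (p₀/κ)
      ≤ plnorm μ (U (δ + (1-δ)/2^N)) f (p * κ^N) :=
    plnorm_mono_exp μ _ hμN f hf hpκpos hN.le
  have hstep3 := hkey N hNmin
  -- the real-number estimate
  set L : ℝ := -Real.log (1 - δ) with hL_def
  have hL : 0 ≤ L := by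
    rw [hL_def, neg_nonneg]
    exact Real.log_nonpos h1δ.le (by linarith)
  have hlogD : ∀ m : ℕ, Real.log (C / ((1-δ)/2^m)^γ)
      = Real.log C + γ * ((m:ℝ) * Real.log 2 + L) := by
    intro m
    have h1 : (0:ℝ) < (1-δ)/2^m := by positivity
    rw [Real.log_div hCpos.ne' (Real.rpow_pos_of_pos h1 γ).ne', Real.log_rpow h1,
      Real.log_div h1δ.ne' (by positivity), Real.log_pow, hL_def]
    ring
  set x : ℝ := κ⁻¹ with hx_def
  have hx0 : 0 ≤ x := by positivity
  have hx1 : x < 1 := by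
    rw [hx_def, inv_lt_one_iff₀]; right; exact hκ
  have h1x : 1 - x = (κ-1)/κ := by rw [hx_def]; field_simp
  have hrx : (1 - x)⁻¹ = r := by rw [h1x, hr_def]; rw [inv_div]
  -- geometric sum bounds
  have hgeo : HasSum (fun n : ℕ => x^n) ((1-x)⁻¹) := hasSum_geometric_of_lt_one hx0 hx1
  have hS : ∑ k ∈ Finset.range N, x^k ≤ r := by
    rw [← hrx]
    exact sum_le_hasSum _ (fun i _ => by positivity) hgeo
  have hT : ∑ k ∈ Finset.range N, ((k:ℝ)+1) * x^k ≤ r^2 := by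
    have hgeo2 : HasSum (fun n : ℕ => (n:ℝ) * x^n) (x / (1-x)^2) :=
      hasSum_coe_mul_geometric_of_norm_lt_one (by rwa [Real.norm_eq_abs, abs_of_nonneg hx0])
    have hgeo3 : HasSum (fun n : ℕ => ((n:ℝ)+1) * x^n) (x / (1-x)^2 + (1-x)⁻¹) := by
      simpa [add_mul] using hgeo2.add hgeo
    have hsum := sum_le_hasSum (Finset.range N) (fun i _ => by positivity) hgeo3
    refine hsum.trans (le_of_eq ?_)
    have h1x0 : (1:ℝ) - x ≠ 0 := by
      rw [h1x]; positivity
    rw [← hrx]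
    field_simp
    ring
  -- comparisons of exponents
  have hpκ' : p * κ ≤ p₀ := by
    rw [le_div_iff₀ hκ0] at hpκ; exact hpκ
  have h1 : κ/p₀ ≤ 1/p := by
    rw [div_le_div_iff₀ hp₀pos hp]; nlinarith
  have hNκ : (N:ℝ) * (κ-1) ≤ κ^N := by
    have := one_add_mul_le_pow (a := κ-1) (by linarith) N
    calc (N:ℝ) * (κ-1) ≤ 1 + (N:ℝ)*(κ-1) := by linarith
      _ ≤ (1 + (κ-1))^N := this
      _ = κ^N := by ring_nf
  have h2 : (κ/p₀) * N ≤ r/p := by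
    rw [div_mul_eq_mul_div, div_le_div_iff₀ hp₀pos hp, hr_def, div_mul_eq_mul_div,
      le_div_iff₀ hκ1]
    nlinarith [mul_le_mul_of_nonneg_left hNκ (by positivity : (0:ℝ) ≤ κ*p),
      mul_le_mul_of_nonneg_left hpN hκ0.le]
  have hpp : 1/(r*p) ≤ 1/p - 1/p₀ := by
    have he : 1/(r*p) = 1/p - 1/(κ*p) := by
      rw [hr_def]; field_simp
    have hκp : κ * p ≤ p₀ := by linarith
    have : 1/p₀ ≤ 1/(κ*p) := one_div_le_one_div_of_le (by positivity) hκp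
    linarith
  -- the main real inequality
  have hQpos : (0:ℝ) < ∏ k ∈ Finset.range N, (C / ((1-δ)/2^(k+1))^γ) ^ (1/(p*κ^k)) :=
    Finset.prod_pos fun k _ => Real.rpow_pos_of_pos (hDpos (k+1)) _
  have hEpos : (0:ℝ) < (C / ((1-δ)/2^N)^γ) ^ (1/(p₀/κ)) :=
    Real.rpow_pos_of_pos (hDpos N) _
  have hbase : (0:ℝ) < M / (1-δ)^γ₀ := by
    have : (0:ℝ) < M := Real.exp_pos _
    positivity
  have hRpos : (0:ℝ) < (M / (1-δ)^γ₀) ^ (1/p - 1/p₀) := Real.rpow_pos_of_pos hbase _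
  have hreal : (C / ((1-δ)/2^N)^γ) ^ (1/(p₀/κ))
      * (∏ k ∈ Finset.range N, (C / ((1-δ)/2^(k+1))^γ) ^ (1/(p*κ^k)))
      ≤ (M / (1-δ)^γ₀) ^ (1/p - 1/p₀) := by
    rw [← Real.log_le_log_iff (by positivity) hRpos,
      Real.log_mul hEpos.ne' hQpos.ne', Real.log_rpow (hDpos N),
      Real.log_prod (fun k _ => (Real.rpow_pos_of_pos (hDpos (k+1)) _).ne')]
    have hlogQ : ∀ k ∈ Finset.range N, Real.log ((C / ((1-δ)/2^(k+1))^γ) ^ (1/(p*κ^k)))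
        = (1/p) * ((Real.log C + γ*L) * x^k) + (1/p) * (γ * Real.log 2 * (((k:ℝ)+1) * x^k)) := by
      intro k _
      rw [Real.log_rpow (hDpos (k+1)), hlogD (k+1)]
      have hxx : 1/(p*κ^k) = (1/p) * x^k := by
        rw [hx_def, inv_pow]
        field_simp
      rw [hxx]
      push_cast
      ring
    have hsumQ : ∑ k ∈ Finset.range N, Real.log ((C / ((1-δ)/2^(k+1))^γ) ^ (1/(p*κ^k)))
        = (1/p) * ((Real.log C + γ*L) * (∑ k ∈ Finset.range N, x^k))
          + (1/p) * (γ * Real.log 2 * (∑ k ∈ Finset.range N, ((k:ℝ)+1) * x^k)) := by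
      rw [Finset.sum_congr rfl hlogQ, Finset.sum_add_distrib, ← Finset.mul_sum, ← Finset.mul_sum,
        ← Finset.mul_sum, ← Finset.mul_sum]
    have hlogR : Real.log ((M / (1-δ)^γ₀) ^ (1/p - 1/p₀))
        = (1/p - 1/p₀) * (Real.log M + γ₀ * L) := by
      rw [Real.log_rpow hbase, Real.log_div (Real.exp_pos _).ne' (by positivity),
        Real.log_rpow h1δ, hL_def, hM_def]
      ring
    have hlogM : Real.log M = r * ((r+1) * Real.log C + γ * (r^2 + r) * Real.log 2) := by
      rw [hM_def, Real.log_exp]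
    have honediv : 1/(p₀/κ) = κ/p₀ := one_div_div _ _
    rw [hsumQ, hlogD N, hlogR, honediv]
    -- final arithmetic
    have e1 : (κ/p₀) * (Real.log C + γ*L) ≤ (1/p) * (Real.log C + γ*L) :=
      mul_le_mul_of_nonneg_right h1 (by positivity)
    have e2 : γ * Real.log 2 * ((κ/p₀) * N) ≤ γ * Real.log 2 * (r/p) :=
      mul_le_mul_of_nonneg_left h2 (by positivity)
    have e3 : (Real.log C + γ*L) * (∑ k ∈ Finset.range N, x^k)
        ≤ (Real.log C + γ*L) * r := mul_le_mul_of_nonneg_left hS (by positivity)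
    have e4 : γ * Real.log 2 * (∑ k ∈ Finset.range N, ((k:ℝ)+1) * x^k)
        ≤ γ * Real.log 2 * r^2 := mul_le_mul_of_nonneg_left hT (by positivity)
    have f3 : (1/p) * ((Real.log C + γ*L) * (∑ k ∈ Finset.range N, x^k))
        ≤ (1/p) * ((Real.log C + γ*L) * r) :=
      mul_le_mul_of_nonneg_left e3 (by positivity)
    have f4 : (1/p) * (γ * Real.log 2 * (∑ k ∈ Finset.range N, ((k:ℝ)+1) * x^k))
        ≤ (1/p) * (γ * Real.log 2 * r^2) :=
      mul_le_mul_of_nonneg_left e4 (by positivity)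
    have hW : (1/p) * ((r+1) * (Real.log C + γ*L) + γ * Real.log 2 * (r^2 + r))
        = (1/(r*p)) * (Real.log M + γ₀ * L) := by
      rw [hlogM, hγ₀_def]
      field_simp
      ring
    have e5 : (1/(r*p)) * (Real.log M + γ₀ * L) ≤ (1/p - 1/p₀) * (Real.log M + γ₀ * L) := by
      refine mul_le_mul_of_nonneg_right hpp ?_
      rw [hlogM]
      positivity
    calc (κ/p₀) * (Real.log C + γ * ((N:ℝ) * Real.log 2 + L))
          + ((1/p) * ((Real.log C + γ*L) * (∑ k ∈ Finset.range N, x^k))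
            + (1/p) * (γ * Real.log 2 * (∑ k ∈ Finset.range N, ((k:ℝ)+1) * x^k)))
        = (κ/p₀) * (Real.log C + γ*L) + γ * Real.log 2 * ((κ/p₀) * N)
          + ((1/p) * ((Real.log C + γ*L) * (∑ k ∈ Finset.range N, x^k))
            + (1/p) * (γ * Real.log 2 * (∑ k ∈ Finset.range N, ((k:ℝ)+1) * x^k))) := by
          ring
      _ ≤ (1/p) * (Real.log C + γ*L) + γ * Real.log 2 * (r/p)
          + ((1/p) * ((Real.log C + γ*L) * r) + (1/p) * (γ * Real.log 2 * r^2)) :=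
          add_le_add (add_le_add e1 e2) (add_le_add f3 f4)
      _ = (1/p) * ((r+1) * (Real.log C + γ*L) + γ * Real.log 2 * (r^2 + r)) := by ring
      _ = (1/(r*p)) * (Real.log M + γ₀ * L) := hW
      _ ≤ (1/p - 1/p₀) * (Real.log M + γ₀ * L) := e5
  -- assemble the chain
  calc plnorm μ (U δ) f p₀
      ≤ ENNReal.ofReal (C / ((1-δ)/2^N)^γ) ^ (1/(p₀/κ))
        * plnorm μ (U (δ + (1-δ)/2^N)) f (p₀/κ) := hstep1
    _ ≤ ENNReal.ofReal (C / ((1-δ)/2^N)^γ) ^ (1/(p₀/κ))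
        * (ENNReal.ofReal (∏ k ∈ Finset.range N, (C / ((1-δ)/2^(k+1))^γ) ^ (1/(p*κ^k)))
            * plnorm μ (U 1) f p) := mul_le_mul_right (hstep2.trans hstep3) _
    _ = ENNReal.ofReal ((C / ((1-δ)/2^N)^γ) ^ (1/(p₀/κ))
          * ∏ k ∈ Finset.range N, (C / ((1-δ)/2^(k+1))^γ) ^ (1/(p*κ^k)))
        * plnorm μ (U 1) f p := by
        rw [ENNReal.ofReal_rpow_of_pos (hDpos N), ← mul_assoc,
          ← ENNReal.ofReal_mul hEpos.le]
    _ ≤ ENNReal.ofReal ((M / (1-δ)^γ₀) ^ (1/p - 1/p₀)) * plnorm μ (U 1) f p :=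
        mul_le_mul_left (ENNReal.ofReal_le_ofReal hreal) _
    _ = ENNReal.ofReal (M / (1-δ)^γ₀) ^ (1/p - 1/p₀) * plnorm μ (U 1) f p := by
        rw [ENNReal.ofReal_rpow_of_pos hbase]
end
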